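/- Let p be an odd prime not dividing 15. If there exist integers x, y with p = 3x² − 3xy + 2y², then the Legendre symbol (−3/p) equals −1. If there exist integers x, y with p = 6x² + 3xy + y², then the Legendre symbol (−3/p) equals 1. -/

import Mathlib

lemma legendreSym_neg_three_eq (p : ℕ) [Fact p.Prime] (hp2 : p ≠ 2) :
    legendreSym p (-3) = legendreSym 3 p := by
  have hodd : p % 2 = 1 := (Nat.Prime.eq_two_or_odd (Fact.out)).resolve_left hp2
  have h1 : legendreSym p (-3) = legendreSym p (-1) * legendreSym p 3 := by
    rw [← legendreSym.mul]; norm_num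
  have h2 : legendreSym p (-1) = (-1 : ℤ) ^ (p / 2) := by
    rw [legendreSym.at_neg_one hp2, ZMod.χ₄_eq_neg_one_pow hodd]
  have h3 : legendreSym p 3 = (-1 : ℤ) ^ (p / 2) * legendreSym 3 p := by
    have := legendreSym.quadratic_reciprocity' (p := 3) (q := p) (by norm_num) hp2
    simpa using this
  rw [h1, h2, h3, ← mul_assoc, ← pow_add, ← two_mul, pow_mul]
  norm_num

lemma legendreSym_three_of (p : ℕ) [Fact p.Prime] :
    ((p : ZMod 3) = 1 → legendreSym 3 (p : ℤ) = 1) ∧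
    ((p : ZMod 3) = 2 → legendreSym 3 (p : ℤ) = -1) := by
  constructor
  · intro h
    rw [legendreSym.eq_one_iff]
    · rw [show ((p : ℤ) : ZMod 3) = (p : ZMod 3) by push_cast; ring, h]
      exact IsSquare.one
    · rw [show ((p : ℤ) : ZMod 3) = (p : ZMod 3) by push_cast; ring, h]
      decide
  · intro h
    rw [legendreSym.eq_neg_one_iff]
    rw [show ((p : ℤ) : ZMod 3) = (p : ZMod 3) by push_cast; ring, h]
    decide

/-- Evaluation of the genus character `χ_{-3}` on the level 3 representatives of
discriminant `-15`: an odd prime `p ∤ 15` represented by `3x² - 3xy + 2y²` has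
Legendre symbol `(-3/p) = -1`, while one represented by `6x² + 3xy + y²` has
`(-3/p) = 1`. -/
theorem genus_character_level3_disc_neg15 (p : ℕ) (hp : p.Prime) (hodd : Odd p)
    (h15 : ¬ p ∣ 15) :
    ((∃ x y : ℤ, (p : ℤ) = 3 * x ^ 2 - 3 * x * y + 2 * y ^ 2) →
      @legendreSym p ⟨hp⟩ (-3) = -1) ∧
    ((∃ x y : ℤ, (p : ℤ) = 6 * x ^ 2 + 3 * x * y + y ^ 2) →
      @legendreSym p ⟨hp⟩ (-3) = 1) := by
  haveI : Fact p.Prime := ⟨hp⟩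
  have hp2 : p ≠ 2 := by rintro rfl; exact (by norm_num : ¬ Odd 2) hodd
  have hp3 : (p : ZMod 3) ≠ 0 := by
    intro h
    have h3 : (3 : ℕ) ∣ p := (ZMod.natCast_eq_zero_iff p 3).mp h
    have := (Nat.prime_dvd_prime_iff_eq (by norm_num) hp).mp h3
    exact h15 (by rw [← this]; norm_num)
  have hkey := legendreSym_neg_three_eq p hp2
  have hval := legendreSym_three_of p
  constructor
  · rintro ⟨x, y, hxy⟩
    have hmod : (p : ZMod 3) = 2 * (y : ZMod 3) ^ 2 := by
      have := congrArg (fun z : ℤ => (z : ZMod 3)) hxy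
      push_cast at this
      rw [this]; ring_nf
      rw [show (3 : ZMod 3) = 0 by decide]; ring
    have hy : ∀ z : ZMod 3, 2 * z ^ 2 ≠ 0 → 2 * z ^ 2 = 2 := by decide
    rw [hkey]
    exact hval.2 (by rw [hmod, hy _ (hmod ▸ hp3)])
  · rintro ⟨x, y, hxy⟩
    have hmod : (p : ZMod 3) = (y : ZMod 3) ^ 2 := by
      have := congrArg (fun z : ℤ => (z : ZMod 3)) hxy
      push_cast at this
      rw [this]; ring_nf
      rw [show (3 : ZMod 3) = 0 by decide, show (6 : ZMod 3) = 0 by decide]; ring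
    have hy : ∀ z : ZMod 3, z ^ 2 ≠ 0 → z ^ 2 = 1 := by decide
    rw [hkey]
    exact hval.1 (by rw [hmod, hy _ (hmod ▸ hp3)])
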